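/- Let 2 ≤ p ≤ q be real numbers and let u, v be real sequences in ℓ^p with uₙ ≥ vₙ ≥ 0 for all n. Then ‖u+v‖_p^q + ‖u−v‖_p^q ≥ 2(‖u‖_p^q + 2^(q-2)‖v‖_p^q). -/

import Mathlib

open Finset Filter Topology NNReal

lemma rpow_superadd {x y r : ℝ} (hx : 0 ≤ x) (hy : 0 ≤ y) (hr : 1 ≤ r) :
    x ^ r + y ^ r ≤ (x + y) ^ r := by
  have h := NNReal.add_rpow_le_rpow_add x.toNNReal y.toNNReal hr
  have h2 : ((x.toNNReal ^ r + y.toNNReal ^ r : ℝ≥0) : ℝ) ≤ (((x.toNNReal + y.toNNReal) ^ r : ℝ≥0) : ℝ) := by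
    exact_mod_cast h
  simpa [NNReal.coe_rpow, Real.coe_toNNReal _ hx, Real.coe_toNNReal _ hy] using h2

lemma key_finite (p q : ℝ) (hp : 2 ≤ p) (hpq : p ≤ q) (u v : ℕ → ℝ)
    (hv0 : ∀ n, 0 ≤ v n) (huv : ∀ n, v n ≤ u n) (N : ℕ) :
    2 * (∑ n ∈ range N, u n ^ p) ^ (q / p)
      + 2 ^ (q - 1) * (∑ n ∈ range N, v n ^ p) ^ (q / p)
    ≤ (∑ n ∈ range N, (u n + v n) ^ p) ^ (q / p)
      + (∑ n ∈ range N, (u n - v n) ^ p) ^ (q / p) := by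
  have hp0 : (0:ℝ) < p := by linarith
  have hp1 : (1:ℝ) ≤ p := by linarith
  have hq0 : (0:ℝ) < q := by linarith
  have hq1 : (1:ℝ) ≤ q := by linarith
  have hu0 : ∀ n, 0 ≤ u n := fun n => (hv0 n).trans (huv n)
  set r : ℝ := q / p with hrdef
  have hr1 : (1:ℝ) ≤ r := (one_le_div hp0).2 hpq
  have hrp : r * p = q := div_mul_cancel₀ q hp0.ne'
  set P : ℝ → ℝ := fun t => ∑ n ∈ range N, (u n + t * v n) ^ p with hP
  set Q : ℝ → ℝ := fun t => ∑ n ∈ range N, (u n - t * v n) ^ p with hQ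
  set K : ℝ := ∑ n ∈ range N, v n ^ p with hK
  have hK0 : 0 ≤ K := sum_nonneg fun n _ => Real.rpow_nonneg (hv0 n) p
  set h : ℝ → ℝ := fun t => P t ^ r + Q t ^ r - 2 ^ (q-1) * t ^ q * K ^ r with hh
  -- derivatives of P and Q
  have hP' : ∀ t : ℝ, HasDerivAt P
      (∑ n ∈ range N, p * (u n + t * v n) ^ (p-1) * v n) t := by
    intro t
    apply HasDerivAt.fun_sum
    intro n _
    have h1 : HasDerivAt (fun t : ℝ => u n + t * v n) (v n) t := by
      simpa using (hasDerivAt_mul_const (v n)).const_add (u n)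
    have h2 := (Real.hasDerivAt_rpow_const (x := u n + t * v n) (p := p)
      (Or.inr hp1)).comp t h1
    exact h2
  have hQ' : ∀ t : ℝ, HasDerivAt Q
      (∑ n ∈ range N, p * (u n - t * v n) ^ (p-1) * (-(v n))) t := by
    intro t
    apply HasDerivAt.fun_sum
    intro n _
    have h1 : HasDerivAt (fun t : ℝ => u n - t * v n) (-(v n)) t := by
      simpa using ((hasDerivAt_mul_const (v n)).const_sub (u n))
    have h2 := (Real.hasDerivAt_rpow_const (x := u n - t * v n) (p := p)
      (Or.inr hp1)).comp t h1
    exact h2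
  have hderiv : ∀ t : ℝ, HasDerivAt h
      (r * P t ^ (r-1) * (∑ n ∈ range N, p * (u n + t * v n) ^ (p-1) * v n)
        + r * Q t ^ (r-1) * (∑ n ∈ range N, p * (u n - t * v n) ^ (p-1) * (-(v n)))
        - 2 ^ (q-1) * (q * t ^ (q-1)) * K ^ r) t := by
    intro t
    have hPr := (Real.hasDerivAt_rpow_const (x := P t) (p := r) (Or.inr hr1)).comp t (hP' t)
    have hQr := (Real.hasDerivAt_rpow_const (x := Q t) (p := r) (Or.inr hr1)).comp t (hQ' t)
    have hg : HasDerivAt (fun t : ℝ => 2 ^ (q-1) * t ^ q * K ^ r)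
        (2 ^ (q-1) * (q * t ^ (q-1)) * K ^ r) t := by
      have := Real.hasDerivAt_rpow_const (x := t) (p := q) (Or.inr hq1)
      exact (this.const_mul ((2:ℝ) ^ (q-1))).mul_const (K ^ r)
    have H := (hPr.add hQr).sub hg
    have H2 : HasDerivAt h ((r * P t ^ (r - 1)) * (∑ n ∈ range N, p * (u n + t * v n) ^ (p - 1) * v n) + (r * Q t ^ (r - 1)) * (∑ n ∈ range N, p * (u n - t * v n) ^ (p - 1) * (-(v n))) - 2 ^ (q - 1) * (q * t ^ (q - 1)) * K ^ r) t := by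
      simp [Function.comp] at H ⊢; exact H
    exact H2
  have hpos : ∀ t ∈ Set.Ioo (0:ℝ) 1,
      0 ≤ r * P t ^ (r-1) * (∑ n ∈ range N, p * (u n + t * v n) ^ (p-1) * v n)
        + r * Q t ^ (r-1) * (∑ n ∈ range N, p * (u n - t * v n) ^ (p-1) * (-(v n)))
        - 2 ^ (q-1) * (q * t ^ (q-1)) * K ^ r := by
    rintro t ⟨ht0, ht1⟩
    have htv : ∀ n, t * v n ≤ v n := fun n => by nlinarith [hv0 n]
    have hb0 : ∀ n, 0 ≤ u n - t * v n := fun n => by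
      have := htv n; have := huv n; linarith
    have ha0 : ∀ n, 0 ≤ u n + t * v n := fun n => by nlinarith [hv0 n, hu0 n]
    set a : ℝ := P t with hadef
    set b : ℝ := Q t with hbdef
    set A : ℝ := ∑ n ∈ range N, (u n + t * v n) ^ (p-1) * v n with hAdef
    set B : ℝ := ∑ n ∈ range N, (u n - t * v n) ^ (p-1) * v n with hBdef
    have hsum1 : (∑ n ∈ range N, p * (u n + t * v n) ^ (p-1) * v n) = p * A := by
      rw [hAdef, mul_sum]; exact sum_congr rfl fun n _ => by ring
    have hsum2 : (∑ n ∈ range N, p * (u n - t * v n) ^ (p-1) * (-(v n))) = -(p * B) := by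
      rw [hBdef, mul_sum, ← sum_neg_distrib]; exact sum_congr rfl fun n _ => by ring
    rw [hsum1, hsum2]
    have ha : 0 ≤ a := sum_nonneg fun n _ => Real.rpow_nonneg (ha0 n) p
    have hbnn : 0 ≤ b := sum_nonneg fun n _ => Real.rpow_nonneg (hb0 n) p
    have hba : b ≤ a := sum_le_sum fun n _ =>
      Real.rpow_le_rpow (hb0 n) (by nlinarith [hv0 n]) hp0.le
    have hba' : b ^ (r-1) ≤ a ^ (r-1) := Real.rpow_le_rpow hbnn hba (by linarith)
    have hB0 : 0 ≤ B := sum_nonneg fun n _ =>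
      mul_nonneg (Real.rpow_nonneg (hb0 n) (p-1)) (hv0 n)
    -- A - B ≥ (2t)^(p-1) * K
    have hAB : (2*t) ^ (p-1) * K ≤ A - B := by
      rw [hAdef, hBdef, hK, ← sum_sub_distrib, mul_sum]
      apply sum_le_sum
      intro n _
      have e1 : (2*t*v n) ^ (p-1) + (u n - t * v n) ^ (p-1) ≤ (u n + t * v n) ^ (p-1) := by
        have hs := rpow_superadd (x := 2*t*v n) (y := u n - t * v n)
          (mul_nonneg (by linarith) (hv0 n)) (hb0 n) (by linarith : (1:ℝ) ≤ p - 1)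
        have : 2*t*v n + (u n - t * v n) = u n + t * v n := by ring
        rwa [this] at hs
      have e2 : (2*t*v n) ^ (p-1) = (2*t) ^ (p-1) * v n ^ (p-1) :=
        Real.mul_rpow (by linarith) (hv0 n)
      have e3 : v n ^ (p-1) * v n = v n ^ p := by
        nth_rewrite 2 [← Real.rpow_one (v n)]
        rw [← Real.rpow_add' (hv0 n) (by intro hc; nlinarith : p - 1 + 1 ≠ 0)]
        norm_num
      calc (2*t) ^ (p-1) * v n ^ p = (2*t) ^ (p-1) * v n ^ (p-1) * v n := by
            rw [mul_assoc, e3]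
        _ = (2*t*v n) ^ (p-1) * v n := by rw [e2]
        _ ≤ ((u n + t * v n) ^ (p-1) - (u n - t * v n) ^ (p-1)) * v n := by
            apply mul_le_mul_of_nonneg_right _ (hv0 n)
            linarith [e1]
        _ = (u n + t * v n) ^ (p-1) * v n - (u n - t * v n) ^ (p-1) * v n := by ring
    -- a ≥ (2t)^p * K
    have haK : (2*t) ^ p * K ≤ a := by
      rw [hadef, hP, hK, mul_sum]
      apply sum_le_sum
      intro n _
      calc (2*t) ^ p * v n ^ p = (2*t*v n) ^ p := (Real.mul_rpow (by linarith) (hv0 n)).symm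
        _ ≤ (u n + t * v n) ^ p := by
            apply Real.rpow_le_rpow (mul_nonneg (by linarith) (hv0 n)) _ hp0.le
            have := htv n; have := huv n; linarith
    -- the key product identity
    have h2t : (0:ℝ) ≤ 2*t := by linarith
    have hprod : ((2*t) ^ p * K) ^ (r-1) * ((2*t) ^ (p-1) * K)
        = 2 ^ (q-1) * t ^ (q-1) * K ^ r := by
      have hpr : p * r = q := by rw [mul_comm]; exact hrp
      have hexp : p * (r-1) + (p-1) = q - 1 := by rw [mul_sub, mul_one]; linarith
      have hKr : K ^ (r-1) * K = K ^ r := by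
        nth_rewrite 2 [← Real.rpow_one K]
        rw [← Real.rpow_add' hK0 (by intro hc; nlinarith : r - 1 + 1 ≠ 0)]
        norm_num
      have h2t2 : (2*t) ^ (p*(r-1)) * (2*t) ^ (p-1) = (2*t) ^ (q-1) := by
        rw [← Real.rpow_add' h2t (by rw [hexp]; exact ne_of_gt (by linarith)), hexp]
      rw [Real.mul_rpow (Real.rpow_nonneg h2t p) hK0]
      calc ((2*t) ^ p) ^ (r-1) * K ^ (r-1) * ((2*t) ^ (p-1) * K)
          = ((2*t) ^ (p*(r-1)) * (2*t) ^ (p-1)) * (K ^ (r-1) * K) := by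
            rw [← Real.rpow_mul h2t]; ring
        _ = (2*t) ^ (q-1) * K ^ r := by rw [h2t2, hKr]
        _ = 2 ^ (q-1) * t ^ (q-1) * K ^ r := by
            rw [Real.mul_rpow (by norm_num : (0:ℝ) ≤ 2) (le_of_lt ht0)]
    -- assemble
    have hg2 : ((2*t) ^ p * K) ^ (r-1) * ((2*t) ^ (p-1) * K) ≤ a ^ (r-1) * (A - B) := by
      apply mul_le_mul (Real.rpow_le_rpow (mul_nonneg (Real.rpow_nonneg h2t p) hK0) haK
        (by linarith)) hAB (mul_nonneg (Real.rpow_nonneg h2t (p-1)) hK0)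
        (Real.rpow_nonneg ha (r-1))
    have hg2' : 2 ^ (q-1) * t ^ (q-1) * K ^ r ≤ a ^ (r-1) * (A - B) := hprod ▸ hg2
    have hr0 : (0:ℝ) ≤ r := by linarith
    have L2 : q * (2 ^ (q-1) * t ^ (q-1) * K ^ r) ≤ q * (a ^ (r-1) * (A - B)) :=
      mul_le_mul_of_nonneg_left hg2' hq0.le
    have L1 : r * (p*B) * (b ^ (r-1)) ≤ r * (p*B) * (a ^ (r-1)) :=
      mul_le_mul_of_nonneg_left hba' (mul_nonneg hr0 (mul_nonneg hp0.le hB0))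
    have E2 : q * (a ^ (r-1) * (A - B)) = r * (p*A) * (a ^ (r-1)) - r * (p*B) * (a ^ (r-1)) := by
      rw [← hrp]; ring
    have E1 : r * a ^ (r-1) * (p*A) + r * b ^ (r-1) * (-(p*B)) - 2 ^ (q-1) * (q * t ^ (q-1)) * K ^ r
        = (r * (p*A) * (a ^ (r-1)) - r * (p*B) * (b ^ (r-1))) - q * (2 ^ (q-1) * t ^ (q-1) * K ^ r) := by
      ring
    rw [E1]
    linarith [L1, L2, E2]
  -- monotonicity
  have hdiff : Differentiable ℝ h := fun t => (hderiv t).differentiableAt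
  have hmono : MonotoneOn h (Set.Icc (0:ℝ) 1) := by
    apply monotoneOn_of_deriv_nonneg (convex_Icc 0 1) hdiff.continuous.continuousOn
      (fun t _ => (hdiff t).differentiableWithinAt)
    intro t ht
    rw [interior_Icc] at ht
    rw [(hderiv t).deriv]
    exact hpos t ht
  have h01 : h 0 ≤ h 1 := hmono (Set.mem_Icc.2 ⟨le_refl 0, zero_le_one⟩)
    (Set.mem_Icc.2 ⟨zero_le_one, le_refl 1⟩) zero_le_one
  have hP0 : P 0 = ∑ n ∈ range N, u n ^ p := by simp [hP]
  have hQ0 : Q 0 = ∑ n ∈ range N, u n ^ p := by simp [hQ]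
  have hP1 : P 1 = ∑ n ∈ range N, (u n + v n) ^ p := by simp [hP]
  have hQ1 : Q 1 = ∑ n ∈ range N, (u n - v n) ^ p := by simp [hQ]
  have hh0 : h 0 = 2 * (∑ n ∈ range N, u n ^ p) ^ r := by
    show P 0 ^ r + Q 0 ^ r - 2 ^ (q-1) * (0:ℝ) ^ q * K ^ r = _
    rw [hP0, hQ0, Real.zero_rpow hq0.ne']
    ring
  have hh1 : h 1 = (∑ n ∈ range N, (u n + v n) ^ p) ^ r
      + (∑ n ∈ range N, (u n - v n) ^ p) ^ r - 2 ^ (q-1) * K ^ r := by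
    show P 1 ^ r + Q 1 ^ r - 2 ^ (q-1) * (1:ℝ) ^ q * K ^ r = _
    rw [hP1, hQ1, Real.one_rpow]
    ring
  rw [hh0, hh1] at h01
  linarith

theorem stmt9 (p q : ℝ) (hp : 2 ≤ p) (hpq : p ≤ q) (u v : ℕ → ℝ)
    (hv0 : ∀ n, 0 ≤ v n) (huv : ∀ n, v n ≤ u n)
    (hu : Summable fun n => u n ^ p) :
    ((∑' n, |u n + v n| ^ p) ^ (1 / p)) ^ q + ((∑' n, |u n - v n| ^ p) ^ (1 / p)) ^ q ≥
      2 * (((∑' n, |u n| ^ p) ^ (1 / p)) ^ q +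
        2 ^ (q - 2) * ((∑' n, |v n| ^ p) ^ (1 / p)) ^ q) := by
  have hp0 : (0:ℝ) < p := by linarith
  have hq0 : (0:ℝ) < q := by linarith
  have hu0 : ∀ n, 0 ≤ u n := fun n => (hv0 n).trans (huv n)
  have e1 : (∑' n, |u n + v n| ^ p) = ∑' n, (u n + v n) ^ p :=
    tsum_congr fun n => by rw [abs_of_nonneg (by linarith [hv0 n, hu0 n])]
  have e2 : (∑' n, |u n - v n| ^ p) = ∑' n, (u n - v n) ^ p :=
    tsum_congr fun n => by rw [abs_of_nonneg (by linarith [huv n])]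
  have e3 : (∑' n, |u n| ^ p) = ∑' n, u n ^ p :=
    tsum_congr fun n => by rw [abs_of_nonneg (hu0 n)]
  have e4 : (∑' n, |v n| ^ p) = ∑' n, v n ^ p :=
    tsum_congr fun n => by rw [abs_of_nonneg (hv0 n)]
  rw [e1, e2, e3, e4, ge_iff_le]
  -- summability
  have hsv : Summable fun n => v n ^ p :=
    hu.of_nonneg_of_le (fun n => Real.rpow_nonneg (hv0 n) p)
      (fun n => Real.rpow_le_rpow (hv0 n) (huv n) hp0.le)
  have hsadd : Summable fun n => (u n + v n) ^ p := by
    apply (hu.mul_left ((2:ℝ) ^ p)).of_nonneg_of_le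
      (fun n => Real.rpow_nonneg (by linarith [hv0 n, hu0 n]) p)
    intro n
    calc (u n + v n) ^ p ≤ (2 * u n) ^ p :=
          Real.rpow_le_rpow (by linarith [hv0 n, hu0 n]) (by linarith [huv n]) hp0.le
      _ = 2 ^ p * u n ^ p := Real.mul_rpow (by norm_num) (hu0 n)
  have hssub : Summable fun n => (u n - v n) ^ p :=
    hu.of_nonneg_of_le (fun n => Real.rpow_nonneg (by linarith [huv n]) p)
      (fun n => Real.rpow_le_rpow (by linarith [huv n]) (by linarith [hv0 n]) hp0.le)
  -- partial sums tend to tsums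
  have tu := hu.hasSum.tendsto_sum_nat
  have tv := hsv.hasSum.tendsto_sum_nat
  have tadd := hsadd.hasSum.tendsto_sum_nat
  have tsub := hssub.hasSum.tendsto_sum_nat
  have hqp0 : (0:ℝ) ≤ q / p := by positivity
  have TL : Tendsto (fun N => 2 * (∑ n ∈ range N, u n ^ p) ^ (q/p)
        + 2 ^ (q-1) * (∑ n ∈ range N, v n ^ p) ^ (q/p)) atTop
      (𝓝 (2 * (∑' n, u n ^ p) ^ (q/p) + 2 ^ (q-1) * (∑' n, v n ^ p) ^ (q/p))) :=
    ((tu.rpow_const (Or.inr hqp0)).const_mul 2).add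
      ((tv.rpow_const (Or.inr hqp0)).const_mul _)
  have TR : Tendsto (fun N => (∑ n ∈ range N, (u n + v n) ^ p) ^ (q/p)
        + (∑ n ∈ range N, (u n - v n) ^ p) ^ (q/p)) atTop
      (𝓝 ((∑' n, (u n + v n) ^ p) ^ (q/p) + (∑' n, (u n - v n) ^ p) ^ (q/p))) :=
    (tadd.rpow_const (Or.inr hqp0)).add (tsub.rpow_const (Or.inr hqp0))
  have hlim : 2 * (∑' n, u n ^ p) ^ (q/p) + 2 ^ (q-1) * (∑' n, v n ^ p) ^ (q/p)
      ≤ (∑' n, (u n + v n) ^ p) ^ (q/p) + (∑' n, (u n - v n) ^ p) ^ (q/p) :=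
    le_of_tendsto_of_tendsto' TL TR (fun N => key_finite p q hp hpq u v hv0 huv N)
  -- convert exponents
  have conv : ∀ x : ℝ, 0 ≤ x → (x ^ (1/p)) ^ q = x ^ (q/p) := by
    intro x hx
    rw [← Real.rpow_mul hx]
    congr 1
    ring
  have n1 : (0:ℝ) ≤ ∑' n, (u n + v n) ^ p :=
    tsum_nonneg fun n => Real.rpow_nonneg (by linarith [hv0 n, hu0 n]) p
  have n2 : (0:ℝ) ≤ ∑' n, (u n - v n) ^ p :=
    tsum_nonneg fun n => Real.rpow_nonneg (by linarith [huv n]) p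
  have n3 : (0:ℝ) ≤ ∑' n, u n ^ p := tsum_nonneg fun n => Real.rpow_nonneg (hu0 n) p
  have n4 : (0:ℝ) ≤ ∑' n, v n ^ p := tsum_nonneg fun n => Real.rpow_nonneg (hv0 n) p
  rw [conv _ n1, conv _ n2, conv _ n3, conv _ n4]
  have h2 : (2:ℝ) ^ (q-1) = 2 * 2 ^ (q-2) := by
    rw [show q - 1 = 1 + (q - 2) by ring, Real.rpow_add (by norm_num), Real.rpow_one]
  nlinarith [hlim, Real.rpow_nonneg n4 (q/p)]
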